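/- Let K be a field and W a finite-dimensional K-vector space. Let Q : W × W* → K be the quadratic form Q(u, ξ) = ξ(u) on V = W ⊕ W*, and let ρ : Clifford(Q) → End_K(⋀W) be the algebra homomorphism determined by ρ(u, ξ) = ε_u + ι_ξ, where ε_u is left exterior multiplication by u ∈ W and ι_ξ is the interior product by ξ ∈ W*. Then ρ is bijective, i.e., the Clifford algebra Clifford(Q) is isomorphic as a K-algebra to the endomorphism algebra End_K(⋀W) of the exterior algebra of W. -/

import Mathlib

namespace ExtBasisAux

open ExteriorAlgebra

set_option linter.unusedSectionVars false

variable {K : Type*} [Field K] {M : Type*} [AddCommGroup M] [Module K M]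
variable {I : Type*} [LinearOrder I] (b : Module.Basis I K M)

noncomputable def wl (l : List I) : ExteriorAlgebra K M :=
  (l.map fun i => ExteriorAlgebra.ι K (b i)).prod

@[simp] lemma wl_nil : wl b ([] : List I) = 1 := rfl

lemma wl_cons (i : I) (l : List I) :
    wl b (i :: l) = ExteriorAlgebra.ι K (b i) * wl b l := by
  simp [wl]

lemma wl_append (l₁ l₂ : List I) : wl b (l₁ ++ l₂) = wl b l₁ * wl b l₂ := by
  simp [wl]

lemma ι_anticomm (u v : M) : ExteriorAlgebra.ι K u * ExteriorAlgebra.ι K v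
    = -(ExteriorAlgebra.ι K v * ExteriorAlgebra.ι K u) := by
  have h := ι_sq_zero (R := K) (u + v)
  rw [map_add, add_mul, mul_add, mul_add, ι_sq_zero, ι_sq_zero, zero_add, add_zero] at h
  exact eq_neg_of_add_eq_zero_left h

lemma wl_perm {l l' : List I} (h : l.Perm l') : ∃ c : K, wl b l' = c • wl b l := by
  induction h with
  | nil => exact ⟨1, by simp⟩
  | cons x _ ih =>
    obtain ⟨c, hc⟩ := ih
    exact ⟨c, by rw [wl_cons, wl_cons, hc, mul_smul_comm]⟩
  | swap x y l =>
    refine ⟨-1, ?_⟩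
    rw [wl_cons, wl_cons, wl_cons, wl_cons, ← mul_assoc, ← mul_assoc,
      ι_anticomm, neg_mul, neg_one_smul]
  | trans _ _ ih1 ih2 =>
    obtain ⟨c, hc⟩ := ih1
    obtain ⟨d, hd⟩ := ih2
    exact ⟨d * c, by rw [hd, hc, smul_smul]⟩

lemma wl_eq_zero {l : List I} (h : ¬ l.Nodup) : wl b l = 0 := by
  classical
  obtain ⟨a, ha⟩ : ∃ a, 2 ≤ l.count a := by
    by_contra hc
    push_neg at hc
    exact h (List.nodup_iff_count_le_one.mpr fun a => by have := hc a; omega)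
  have hal : a ∈ l := by
    rw [← List.count_pos_iff]; omega
  have ha2 : a ∈ l.erase a := by
    have : (l.erase a).count a = l.count a - 1 := List.count_erase_self
    rw [← List.count_pos_iff]; omega
  have hperm : l.Perm (a :: a :: (l.erase a).erase a) :=
    (List.perm_cons_erase hal).trans ((List.perm_cons_erase ha2).cons a)
  obtain ⟨c, hc⟩ := wl_perm b hperm.symm
  rw [hc, wl_cons, wl_cons, ← mul_assoc, ι_sq_zero, zero_mul, smul_zero]

lemma contract_wl_eq_zero (ξ : Module.Dual K M) {l : List I} (h : ∀ j ∈ l, ξ (b j) = 0) :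
    CliffordAlgebra.contractLeft (Q := (0 : QuadraticForm K M)) ξ (wl b l) = 0 := by
  induction l with
  | nil => simpa using CliffordAlgebra.contractLeft_one _ ξ
  | cons i l ih =>
    rw [wl_cons]
    rw [CliffordAlgebra.contractLeft_ι_mul, h i (by simp),
      ih (fun j hj => h j (by simp [hj])), zero_smul, mul_zero, sub_zero]

/-- Iterated contraction by the coordinate functionals of `s`, head applied first. -/
noncomputable def ctr : List I → Module.End K (ExteriorAlgebra K M)
  | [] => 1
  | i :: l => ctr l * CliffordAlgebra.contractLeft (Q := (0 : QuadraticForm K M)) (b.coord i)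

@[simp] lemma ctr_nil : ctr b ([] : List I) = 1 := rfl

lemma ctr_cons' (i : I) (l : List I) :
    ctr b (i :: l)
      = ctr b l * CliffordAlgebra.contractLeft (Q := (0 : QuadraticForm K M)) (b.coord i) :=
  rfl

lemma ctr_cons (i : I) (l : List I) (x : ExteriorAlgebra K M) :
    ctr b (i :: l) x
      = ctr b l (CliffordAlgebra.contractLeft (Q := (0 : QuadraticForm K M)) (b.coord i) x) :=
  rfl

lemma algebraMapInv_ι_mul (v : M) (y : ExteriorAlgebra K M) :
    algebraMapInv (ExteriorAlgebra.ι K v * y) = 0 := by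
  rw [map_mul]
  have : (algebraMapInv : ExteriorAlgebra K M →ₐ[K] K) (ExteriorAlgebra.ι K v) = 0 := by
    simp [algebraMapInv, ExteriorAlgebra.lift_ι_apply]
  rw [this, zero_mul]

lemma almi_ctr_ι_mul (v : M) (s : List I) (hv : ∀ i ∈ s, b.coord i v = 0)
    (y : ExteriorAlgebra K M) :
    algebraMapInv (ctr b s (ExteriorAlgebra.ι K v * y)) = 0 := by
  induction s generalizing y with
  | nil => simpa using algebraMapInv_ι_mul v y
  | cons k s ih =>
    rw [ctr_cons, CliffordAlgebra.contractLeft_ι_mul, hv k (by simp), zero_smul, zero_sub,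
      map_neg, map_neg, ih (fun i hi => hv i (by simp [hi])), neg_zero]

lemma coord_self (i : I) : b.coord i (b i) = 1 := by simp

lemma coord_ne {i j : I} (h : j ≠ i) : b.coord i (b j) = 0 := by
  simp [Module.Basis.repr_self_apply, h]

lemma almi_ctr_diag : ∀ (t s : List I), s.Pairwise (· < ·) → t.Pairwise (· < ·) →
    algebraMapInv (ctr b s (wl b t)) = if s = t then 1 else 0 := by
  intro t
  induction t with
  | nil =>
    rintro (_ | ⟨i, s'⟩) hs ht
    · simp
    · rw [wl_nil, ctr_cons, CliffordAlgebra.contractLeft_one, map_zero, map_zero]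
      simp
  | cons j t' ih =>
    rintro (_ | ⟨i, s'⟩) hs ht
    · rw [wl_cons]
      simpa using algebraMapInv_ι_mul (b j) (wl b t')
    · have hs' : s'.Pairwise (· < ·) := hs.of_cons
      have ht' : t'.Pairwise (· < ·) := ht.of_cons
      rw [wl_cons, ctr_cons, CliffordAlgebra.contractLeft_ι_mul]
      by_cases hij : i = j
      · subst hij
        have hnt : CliffordAlgebra.contractLeft (Q := (0 : QuadraticForm K M))
            (b.coord i) (wl b t') = 0 :=
          contract_wl_eq_zero b _ (fun k hk => coord_ne b (ne_of_gt (List.rel_of_pairwise_cons ht hk)))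
        rw [coord_self, hnt, mul_zero, sub_zero, one_smul, ih s' hs' ht']
        simp
      · rw [coord_ne b (Ne.symm hij), zero_smul, zero_sub, map_neg, map_neg]
        rcases lt_or_gt_of_ne hij with hlt | hgt
        · -- i < j : contraction of wl t' by coord i is 0
          have : CliffordAlgebra.contractLeft (Q := (0 : QuadraticForm K M))
              (b.coord i) (wl b t') = 0 :=
            contract_wl_eq_zero b _ (fun k hk =>
              coord_ne b (ne_of_gt (lt_trans hlt (List.rel_of_pairwise_cons ht hk))))
          rw [this, mul_zero, map_zero, map_zero, neg_zero, if_neg (by simp [hij])]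
        · -- j < i : use almi_ctr_ι_mul with v = b j
          rw [almi_ctr_ι_mul b (b j) s'
            (fun k hk => coord_ne b (ne_of_lt (lt_trans hgt (List.rel_of_pairwise_cons hs hk)))) _,
            neg_zero, if_neg (by simp [hij])]

section Fintype

variable [Fintype I]

/-- Wedge monomial indexed by a finset. -/
noncomputable def wf (s : Finset I) : ExteriorAlgebra K M := wl b (s.sort (· ≤ ·))

lemma wf_def (s : Finset I) : wf b s = wl b (s.sort (· ≤ ·)) := rfl

lemma wf_empty : wf b (∅ : Finset I) = 1 := by
  rw [wf, Finset.sort_empty, wl_nil]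

lemma sort_inj {s t : Finset I} (h : s.sort (· ≤ ·) = t.sort (· ≤ ·)) : s = t := by
  rw [← Finset.sort_toFinset s (· ≤ ·), h, Finset.sort_toFinset]

lemma almi_ctr_wf (s t : Finset I) :
    algebraMapInv (ctr b (s.sort (· ≤ ·)) (wf b t)) = if s = t then 1 else 0 := by
  rw [wf, almi_ctr_diag b _ _ (Finset.sortedLT_sort s).pairwise (Finset.sortedLT_sort t).pairwise]
  by_cases h : s = t
  · subst h; simp
  · rw [if_neg (fun hc => h (sort_inj hc)), if_neg h]

lemma wf_linearIndependent : LinearIndependent K (wf b) := by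
  classical
  rw [Fintype.linearIndependent_iff]
  intro g hg t
  have h := congrArg (fun x => algebraMapInv (ctr b (t.sort (· ≤ ·)) x)) hg
  simp only [map_sum, map_smul, map_zero] at h
  rw [Finset.sum_congr rfl (fun s _ => by rw [almi_ctr_wf b t s])] at h
  simpa [mul_ite, Finset.sum_ite_eq] using h

lemma wl_mem_span (l : List I) :
    wl b l ∈ Submodule.span K (Set.range (wf b)) := by
  classical
  by_cases h : l.Nodup
  · have hp : (l.toFinset.sort (· ≤ ·)).Perm l :=
      (Finset.sort_perm_toList _ _).trans (List.toFinset_toList h)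
    obtain ⟨c, hc⟩ := wl_perm b hp
    rw [hc]
    exact Submodule.smul_mem _ _ (Submodule.subset_span ⟨l.toFinset, rfl⟩)
  · rw [wl_eq_zero b h]; exact zero_mem _

lemma wf_span : Submodule.span K (Set.range (wf b)) = ⊤ := by
  classical
  rw [Submodule.eq_top_iff']
  intro x
  induction x using ExteriorAlgebra.induction with
  | algebraMap r =>
    rw [Algebra.algebraMap_eq_smul_one]
    exact Submodule.smul_mem _ _ (by simpa using wl_mem_span b [])
  | ι v =>
    rw [← Module.Basis.sum_repr b v, map_sum]
    refine Submodule.sum_mem _ fun i _ => ?_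
    rw [map_smul]
    refine Submodule.smul_mem _ _ ?_
    simpa [wl_cons] using wl_mem_span b [i]
  | add a c ha hc => exact Submodule.add_mem _ ha hc
  | mul a c ha hc =>
    induction ha using Submodule.span_induction with
    | mem x hx =>
      obtain ⟨s, rfl⟩ := hx
      induction hc using Submodule.span_induction with
      | mem y hy =>
        obtain ⟨t, rfl⟩ := hy
        rw [wf, wf, ← wl_append]
        exact wl_mem_span b _
      | zero => rw [mul_zero]; exact zero_mem _
      | add y z _ _ hy hz => rw [mul_add]; exact Submodule.add_mem _ hy hz
      | smul c y _ hy => rw [mul_smul_comm]; exact Submodule.smul_mem _ _ hy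
    | zero => rw [zero_mul]; exact zero_mem _
    | add y z _ _ hy hz => rw [add_mul]; exact Submodule.add_mem _ hy hz
    | smul c y _ hy => rw [smul_mul_assoc]; exact Submodule.smul_mem _ _ hy

/-- The basis of the exterior algebra indexed by finsets. -/
noncomputable def extBasis : Module.Basis (Finset I) K (ExteriorAlgebra K M) :=
  Module.Basis.mk (wf_linearIndependent b) (wf_span b).ge

@[simp] lemma extBasis_apply (s : Finset I) : extBasis b s = wf b s := Module.Basis.mk_apply _ _ _

include b in
lemma extBasis_finrank :
    Module.finrank K (ExteriorAlgebra K M) = 2 ^ Fintype.card I := by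
  classical
  rw [Module.finrank_eq_card_basis (extBasis b), Fintype.card_finset]

end Fintype

end ExtBasisAux

/-- The quadratic form `Q(u, ξ) = ξ(u)` on `W ⊕ W*`. -/
noncomputable def pairingQ (K W : Type*) [Field K] [AddCommGroup W] [Module K W] :
    QuadraticForm K (W × Module.Dual K W) :=
  LinearMap.BilinMap.toQuadraticMap
    (LinearMap.mk₂ K (fun (x y : W × Module.Dual K W) => x.2 y.1)
      (fun x x' y => by simp)
      (fun a x y => by simp)
      (fun x y y' => by simp)
      (fun a x y => by simp))

set_option maxHeartbeats 1000000 in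
set_option synthInstance.maxHeartbeats 400000 in
/-- For a finite-dimensional vector space `W`, the algebra homomorphism
`ρ : Clifford(Q) → End(⋀ W)` determined by `ρ(u, ξ) = ε_u + ι_ξ` (exterior multiplication plus
contraction) is bijective, i.e. `Clifford(Q) ≅ End(⋀ W)` as `K`-algebras. -/
theorem stmt_1 (K W : Type*) [Field K] [AddCommGroup W] [Module K W] [FiniteDimensional K W]
    (ρ : CliffordAlgebra (pairingQ K W) →ₐ[K] Module.End K (ExteriorAlgebra K W))
    (hρ : ∀ (u : W) (ξ : Module.Dual K W),
      ρ (CliffordAlgebra.ι (pairingQ K W) (u, ξ))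
        = LinearMap.mulLeft K (ExteriorAlgebra.ι K u)
          + CliffordAlgebra.contractLeft (Q := (0 : QuadraticForm K W)) ξ) :
    Function.Bijective ρ := by
  classical
  let n := Module.finrank K W
  let b : Module.Basis (Fin n) K W := Module.finBasis K W
  let B := ExtBasisAux.extBasis b
  let A : Subalgebra K (Module.End K (ExteriorAlgebra K W)) := ρ.range
  have h1 : ∀ u : W, LinearMap.mulLeft K (ExteriorAlgebra.ι K u) ∈ A := by
    intro u
    refine ⟨CliffordAlgebra.ι (pairingQ K W) (u, 0), ?_⟩
    show ρ (CliffordAlgebra.ι (pairingQ K W) (u, 0)) = _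
    rw [hρ u 0, map_zero, add_zero]
  have h2 : ∀ ξ : Module.Dual K W,
      (CliffordAlgebra.contractLeft (Q := (0 : QuadraticForm K W)) ξ
        : Module.End K (ExteriorAlgebra K W)) ∈ A := by
    intro ξ
    refine ⟨CliffordAlgebra.ι (pairingQ K W) (0, ξ), ?_⟩
    show ρ (CliffordAlgebra.ι (pairingQ K W) (0, ξ)) = _
    rw [hρ 0 ξ, map_zero, LinearMap.mulLeft_zero_eq_zero, zero_add]
  have hctr : ∀ l : List (Fin n), ExtBasisAux.ctr b l ∈ A := by
    intro l
    induction l with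
    | nil => exact one_mem A
    | cons i l ih =>
      rw [ExtBasisAux.ctr_cons']
      exact mul_mem ih (h2 (b.coord i))
  have hmul : ∀ l : List (Fin n), LinearMap.mulLeft K (ExtBasisAux.wl b l) ∈ A := by
    intro l
    induction l with
    | nil =>
      rw [ExtBasisAux.wl_nil]
      have : LinearMap.mulLeft K (1 : ExteriorAlgebra K W) = 1 := by
        ext x; simp [LinearMap.mulLeft_apply]
      rw [this]; exact one_mem A
    | cons i l ih =>
      rw [ExtBasisAux.wl_cons, LinearMap.mulLeft_mul]
      exact mul_mem (h1 (b i)) ih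
  let fac : Fin n → Module.End K (ExteriorAlgebra K W) := fun i =>
    (CliffordAlgebra.contractLeft (Q := (0 : QuadraticForm K W)) (b.coord i)) *
      (LinearMap.mulLeft K (ExteriorAlgebra.ι K (b i)))
  have hfac : ∀ i, fac i ∈ A := fun i => mul_mem (h2 _) (h1 (b i))
  let P : Module.End K (ExteriorAlgebra K W) := ((List.finRange n).map fac).prod
  have hP : P ∈ A := by
    refine Subalgebra.list_prod_mem _ ?_
    intro x hx
    simp only [List.mem_map] at hx
    obtain ⟨i, -, rfl⟩ := hx
    exact hfac i
  have hfac_eval : ∀ (i : Fin n) (t : Finset (Fin n)),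
      fac i (ExtBasisAux.wf b t) = if i ∈ t then 0 else ExtBasisAux.wf b t := by
    intro i t
    rw [show fac i (ExtBasisAux.wf b t)
      = CliffordAlgebra.contractLeft (Q := (0 : QuadraticForm K W)) (b.coord i)
          (ExteriorAlgebra.ι K (b i) * ExtBasisAux.wf b t) from rfl]
    by_cases hit : i ∈ t
    · have hz : ExteriorAlgebra.ι K (b i) * ExtBasisAux.wf b t = 0 := by
        have := ExtBasisAux.wl_eq_zero b (l := i :: t.sort (· ≤ ·))
          (by simp [List.nodup_cons, Finset.mem_sort, hit])
        rw [ExtBasisAux.wl_cons] at this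
        rw [ExtBasisAux.wf_def]; exact this
      rw [hz, map_zero, if_pos hit]
    · rw [CliffordAlgebra.contractLeft_ι_mul, ExtBasisAux.coord_self, ExtBasisAux.wf_def,
        ExtBasisAux.contract_wl_eq_zero b _ (fun j hj => ExtBasisAux.coord_ne b
          (fun hji => hit (by rw [← hji]; exact (Finset.mem_sort _).mp hj))),
        mul_zero, sub_zero, one_smul, if_neg hit]
  have hProd_eval : ∀ (l : List (Fin n)) (t : Finset (Fin n)),
      ((l.map fac).prod) (ExtBasisAux.wf b t)
        = if ∀ i ∈ l, i ∉ t then ExtBasisAux.wf b t else 0 := by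
    intro l t
    induction l with
    | nil => simp
    | cons i l ih =>
      rw [List.map_cons, List.prod_cons, Module.End.mul_apply, ih]
      by_cases hl : ∀ j ∈ l, j ∉ t
      · rw [if_pos hl, hfac_eval]
        by_cases hit : i ∈ t
        · rw [if_pos hit, if_neg (by push_neg; exact ⟨i, by simp, hit⟩)]
        · rw [if_neg hit, if_pos (by
            intro j hj
            rcases List.mem_cons.mp hj with rfl | hj
            · exact hit
            · exact hl j hj)]
      · rw [if_neg hl, map_zero,
          if_neg (fun hc => hl fun j hj => hc j (List.mem_cons_of_mem i hj))]
  have hP_eval : ∀ t, P (ExtBasisAux.wf b t) = if t = ∅ then 1 else 0 := by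
    intro t
    rw [hProd_eval]
    by_cases ht : t = ∅
    · subst ht
      rw [if_pos (by simp), if_pos rfl, ExtBasisAux.wf_empty]
    · rw [if_neg ?_, if_neg ht]
      obtain ⟨i, hi⟩ := Finset.nonempty_iff_ne_empty.mpr ht
      exact fun hc => (hc i (List.mem_finRange i)) hi
  have hP_eq : P = (Algebra.linearMap K (ExteriorAlgebra K W)) ∘ₗ
      (ExteriorAlgebra.algebraMapInv (R := K) (M := W)).toLinearMap := by
    apply B.ext
    intro t
    rw [ExtBasisAux.extBasis_apply, LinearMap.comp_apply, hP_eval, AlgHom.toLinearMap_apply,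
      Algebra.linearMap_apply]
    by_cases ht : t = ∅
    · subst ht
      rw [if_pos rfl, ExtBasisAux.wf_empty, map_one, map_one]
    · rw [if_neg ht]
      obtain ⟨j, r, hjr⟩ : ∃ j r, t.sort (· ≤ ·) = j :: r := by
        cases hs : t.sort (· ≤ ·) with
        | nil =>
          exact absurd (by rw [← Finset.sort_toFinset t (· ≤ ·), hs, List.toFinset_nil]) ht
        | cons j r => exact ⟨j, r, rfl⟩
      rw [ExtBasisAux.wf_def, hjr, ExtBasisAux.wl_cons, ExtBasisAux.algebraMapInv_ι_mul,
        map_zero]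
  have hunit : ∀ s t : Finset (Fin n),
      LinearMap.smulRight (B.coord t) (ExtBasisAux.wf b s) ∈ A := by
    intro s t
    have heq : LinearMap.smulRight (B.coord t) (ExtBasisAux.wf b s)
        = LinearMap.mulLeft K (ExtBasisAux.wl b (s.sort (· ≤ ·))) * P
            * ExtBasisAux.ctr b (t.sort (· ≤ ·)) := by
      apply B.ext
      intro t'
      rw [ExtBasisAux.extBasis_apply, Module.End.mul_apply, Module.End.mul_apply,
        LinearMap.smulRight_apply, hP_eq, LinearMap.comp_apply, AlgHom.toLinearMap_apply,
        Algebra.linearMap_apply, ExtBasisAux.almi_ctr_wf b t t', LinearMap.mulLeft_apply]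
      have hc : B.coord t (ExtBasisAux.wf b t') = if t' = t then 1 else 0 := by
        rw [← ExtBasisAux.extBasis_apply b t', Module.Basis.coord_apply, Module.Basis.repr_self_apply]
      rw [hc]
      by_cases htt : t = t'
      · subst htt
        rw [if_pos rfl, map_one, mul_one, one_smul, ExtBasisAux.wf_def]
      · rw [if_neg htt, if_neg (Ne.symm htt), map_zero, mul_zero, zero_smul]
    rw [heq]
    exact mul_mem (mul_mem (hmul _) hP) (hctr _)
  have hsmul : ∀ (t : Finset (Fin n)) (y : ExteriorAlgebra K W), LinearMap.smulRight (B.coord t) y ∈ A := by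
    intro t y
    have hy : y ∈ Submodule.span K (Set.range (ExtBasisAux.wf b)) := by
      rw [ExtBasisAux.wf_span b]; trivial
    induction hy using Submodule.span_induction with
    | mem y hy => obtain ⟨s, rfl⟩ := hy; exact hunit s t
    | zero =>
      have : LinearMap.smulRight (B.coord t) (0 : ExteriorAlgebra K W) = 0 := by ext x; simp
      rw [this]; exact zero_mem A
    | add y z _ _ hy hz =>
      have : LinearMap.smulRight (B.coord t) (y + z)
          = LinearMap.smulRight (B.coord t) y + LinearMap.smulRight (B.coord t) z := by
        ext x; simp [smul_add]
      rw [this]; exact add_mem hy hz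
    | smul c y _ hy =>
      have : LinearMap.smulRight (B.coord t) (c • y)
          = c • LinearMap.smulRight (B.coord t) y := by
        ext x; simp [smul_comm c]
      rw [this]; exact Subalgebra.smul_mem A hy c
  have hsurj : Function.Surjective ρ := by
    intro T
    have hTsum : T = ∑ t : Finset (Fin n), LinearMap.smulRight (B.coord t) (T (B t)) := by
      apply B.ext
      intro t'
      rw [LinearMap.sum_apply]
      simp only [LinearMap.smulRight_apply, Module.Basis.coord_apply, Module.Basis.repr_self_apply]
      simp [ite_smul]
    have : T ∈ A := by
      rw [hTsum]
      exact Subalgebra.sum_mem A fun t _ => hsmul t (T (B t))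
    exact this
  -- injectivity via dimension count
  let bDual : Module.Basis (Fin n) K (Module.Dual K W) := b.dualBasis
  let bV : Module.Basis (Fin (n + n)) K (W × Module.Dual K W) := (b.prod bDual).reindex finSumFinEquiv
  haveI : Module.Finite K (ExteriorAlgebra K W) := Module.Finite.of_basis B
  haveI : Module.Finite K (ExteriorAlgebra K (W × Module.Dual K W)) :=
    Module.Finite.of_basis (ExtBasisAux.extBasis bV)
  have hBp : LinearMap.BilinMap.toQuadraticMap (LinearMap.mk₂ K
        (fun (x y : W × Module.Dual K W) => x.2 y.1)
        (fun x x' y => by simp) (fun a x y => by simp) (fun x y y' => by simp)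
        (fun a x y => by simp))
      = pairingQ K W - (0 : QuadraticForm K (W × Module.Dual K W)) := by
    have h0 := sub_zero (pairingQ K W)
    rw [h0]
    rfl
  let e := CliffordAlgebra.changeFormEquiv hBp
  haveI : Module.Finite K (CliffordAlgebra (pairingQ K W)) := Module.Finite.equiv e
  have hrank : Module.finrank K (CliffordAlgebra (pairingQ K W))
      = Module.finrank K (Module.End K (ExteriorAlgebra K W)) := by
    rw [← LinearEquiv.finrank_eq e, ExtBasisAux.extBasis_finrank bV,
      Module.finrank_linearMap, ExtBasisAux.extBasis_finrank b,
      Fintype.card_fin, Fintype.card_fin, pow_add]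
  have hinj : Function.Injective ρ :=
    (LinearMap.injective_iff_surjective_of_finrank_eq_finrank (f := ρ.toLinearMap) hrank).mpr
      hsurj
  exact ⟨hinj, hsurj⟩
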